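/- arXiv:1807.11360 — 2 statements merged into one kernel-verified Lean document; each statement's English description precedes it below -/
import Mathlib

section
/- Let p be a prime and 1 ≤ m ≤ n ≤ p−1. Then the monomial digraph D(p; m, n) is strong and diam(D(p; m, n)) ≤ 2p − 1. -/
/-- `walkLen r k x y` means there is a directed walk of length exactly `k`
from `x` to `y` in the digraph with arc relation `r`. -/
def walkLen {V : Type*} (r : V → V → Prop) : ℕ → V → V → Prop
  | 0 => fun x y => x = y
  | k + 1 => fun x y => ∃ z, r x z ∧ walkLen r k z y

/-- The distance from `x` to `y`: the minimum length of a directed walk,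
`⊤` if `y` is not reachable from `x`. -/
noncomputable def ddist {V : Type*} (r : V → V → Prop) (x y : V) : ℕ∞ :=
  ⨅ n ∈ {n : ℕ | walkLen r n x y}, (n : ℕ∞)

/-- The diameter of the digraph: the maximum of distances over all ordered pairs. -/
noncomputable def ddiam {V : Type*} (r : V → V → Prop) : ℕ∞ :=
  ⨆ x, ⨆ y, ddist r x y

/-- A digraph is strong if every vertex is reachable from every vertex. -/
def IsStrongDigraph {V : Type*} (r : V → V → Prop) : Prop :=
  ∀ x y : V, ∃ n : ℕ, walkLen r n x y

/-- The arc relation of the monomial digraph `D(q; m, n)`: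
`(x₁, x₂) → (y₁, y₂)` iff `x₂ + y₂ = x₁ ^ m * y₁ ^ n`. -/
def monomialArc {F : Type*} [Field F] (m n : ℕ) (x y : F × F) : Prop :=
  x.2 + y.2 = x.1 ^ m * y.1 ^ n

private theorem walkLen_one {V : Type*} {r : V → V → Prop} {x y : V} (h : r x y) :
    walkLen r 1 x y := ⟨y, h, rfl⟩

private theorem walkLen_cons {V : Type*} {r : V → V → Prop} {k : ℕ} {x z y : V}
    (h : r x z) (hw : walkLen r k z y) : walkLen r (k + 1) x y := ⟨z, h, hw⟩

private theorem walkLen_trans {V : Type*} {r : V → V → Prop} {k l : ℕ} {x y z : V}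
    (h1 : walkLen r k x y) (h2 : walkLen r l y z) : walkLen r (k + l) x z := by
  induction k generalizing x with
  | zero =>
      have hxy : x = y := h1
      rw [show 0 + l = l by omega, hxy]
      exact h2
  | succ k ih =>
      obtain ⟨w, hw, hk⟩ := h1
      rw [show k + 1 + l = (k + l) + 1 by omega]
      exact ⟨w, hw, ih hk⟩

private theorem mstep {F : Type*} [Field F] {m n : ℕ} (x₁ x₂ y₁ y₂ : F)
    (h : x₂ + y₂ = x₁ ^ m * y₁ ^ n) : monomialArc m n (x₁, x₂) (y₁, y₂) := h

theorem strong_and_diam_le_two_p_sub_one {p m n : ℕ} (hp : p.Prime)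
    (F : Type*) [Field F] [Fintype F] (hF : Fintype.card F = p)
    (hm : 1 ≤ m) (hmn : m ≤ n) (hn : n ≤ p - 1) :
    IsStrongDigraph (monomialArc (F := F) m n) ∧
      ddiam (monomialArc (F := F) m n) ≤ ((2 * p - 1 : ℕ) : ℕ∞) := by
  classical
  haveI : Fact p.Prime := ⟨hp⟩
  have hp2le : 2 ≤ p := hp.two_le
  have hm0 : (0 : F) ^ m = 0 := zero_pow (by omega)
  have hn0 : (0 : F) ^ n = 0 := zero_pow (by omega)
  -- (p : F) = 0
  have hp0 : (p : F) = 0 := by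
    rw [← hF]; exact FiniteField.cast_card_eq_zero F
  -- characteristic of F is p
  have hring : ringChar F = p := by
    have h1 : (ringChar F).Prime := CharP.char_is_prime F (ringChar F)
    have h2 : ringChar F ∣ p := ringChar.dvd hp0
    exact (Nat.prime_dvd_prime_iff_eq h1 hp).mp h2
  haveI hcharP : CharP F p := ringChar.of_eq hring
  -- every element of F is a natural cast below p
  have hrepr : ∀ x : F, ∃ w : ℕ, w < p ∧ (w : F) = x := by
    intro x
    have hinj : Function.Injective (ZMod.castHom (dvd_refl p) F) :=
      (ZMod.castHom (dvd_refl p) F).injective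
    have hcard : Fintype.card (ZMod p) = Fintype.card F := by rw [ZMod.card, hF]
    have hbij : Function.Bijective (ZMod.castHom (dvd_refl p) F) :=
      (Fintype.bijective_iff_injective_and_card _).mpr ⟨hinj, hcard⟩
    obtain ⟨z, hz⟩ := hbij.2 x
    refine ⟨z.val, ZMod.val_lt z, ?_⟩
    have : ((z.val : ℕ) : F) = (ZMod.castHom (dvd_refl p) F) ((z.val : ℕ) : ZMod p) := by
      rw [map_natCast]
    rw [this, ZMod.natCast_val, ZMod.cast_id]
    exact hz
  -- Fermat's little theorem
  have hpow : ∀ x : F, x ≠ 0 → x ^ (p - 1) = 1 := by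
    intro x hx
    rw [← hF]
    exact FiniteField.pow_card_sub_one_eq_one x hx
  -- generator of the unit group
  have hgen : ∃ g : F, g ≠ 0 ∧ ∀ k : ℕ, 0 < k → k < p - 1 → g ^ k ≠ 1 := by
    obtain ⟨ζ, hζ⟩ := IsCyclic.exists_generator (α := Fˣ)
    have hord : orderOf ζ = p - 1 := by
      rw [orderOf_eq_card_of_forall_mem_zpowers hζ, Nat.card_eq_fintype_card,
        Fintype.card_units, hF]
    refine ⟨(ζ : F), Units.ne_zero ζ, ?_⟩
    intro k hk0 hk hcontra
    have h1 : (ζ ^ k : Fˣ) = 1 := by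
      ext
      push_cast
      exact hcontra
    have h2 := orderOf_dvd_of_pow_eq_one h1
    rw [hord] at h2
    exact absurd (Nat.le_of_dvd hk0 h2) (by omega)
  -- Main reachability claim
  suffices H : ∀ x y : F × F, ∃ k : ℕ, k ≤ 2 * p - 1 ∧ walkLen (monomialArc (F := F) m n) k x y by
    constructor
    · intro x y
      obtain ⟨k, _, hw⟩ := H x y
      exact ⟨k, hw⟩
    · unfold ddiam
      refine iSup_le fun x => iSup_le fun y => ?_
      obtain ⟨k, hk, hw⟩ := H x y
      have h1 : ddist (monomialArc (F := F) m n) x y ≤ (k : ℕ∞) := by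
        unfold ddist
        exact iInf₂_le k hw
      exact h1.trans (Nat.cast_le.mpr hk)
  rintro ⟨a, b⟩ ⟨u, v⟩
  by_cases hp2 : p = 2
  · -- CASE p = 2 : m = n = 1
    have hm1 : m = 1 := by omega
    have hn1 : n = 1 := by omega
    subst hm1; subst hn1
    have two0 : (2 : F) = 0 := by
      have := hp0; rw [hp2] at this; exact_mod_cast this
    by_cases hv : v = b
    · -- two-step walk
      refine ⟨2, by omega, ?_⟩
      refine walkLen_cons (mstep a b 0 (-b) ?_) (walkLen_one (mstep 0 (-b) u v ?_))
      · rw [pow_one, pow_one, mul_zero]; ring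
      · rw [pow_one, pow_one, zero_mul, hv]; ring
    · -- v = b + 1; three-step walk
      have hvb : v = b + 1 := by
        have h1 : v - b ≠ 0 := fun h => hv (by linear_combination h)
        have h2 : (v - b) ^ (p - 1) = 1 := hpow _ h1
        rw [hp2] at h2
        norm_num at h2
        linear_combination h2
      refine ⟨3, by omega, ?_⟩
      refine walkLen_cons (mstep a b (u + 1) (a * (u + 1) - b) ?_)
        (walkLen_cons (mstep (u + 1) (a * (u + 1) - b) (1 + (u + 1) * a)
          ((u + 1) * (1 + (u + 1) * a) - (a * (u + 1) - b)) ?_)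
          (walkLen_one (mstep (1 + (u + 1) * a)
            ((u + 1) * (1 + (u + 1) * a) - (a * (u + 1) - b)) u v ?_)))
      · rw [pow_one, pow_one]; ring
      · rw [pow_one, pow_one]; ring
      · rw [pow_one, pow_one, hvb]; linear_combination ((b : F) + 1) * two0
  · -- p odd
    obtain ⟨hh, hph⟩ := hp.odd_of_ne_two hp2
    have hp3 : 3 ≤ p := by omega
    have hh1 : 1 ≤ hh := by omega
    obtain ⟨g, hg0, hgk⟩ := hgen
    by_cases hmn2 : m = n
    · subst hmn2
      by_cases hnp : m = p - 1
      · -- CASE C : m = n = p - 1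
        have hx1 : ∀ x : F, x ≠ 0 → x ^ m = 1 := by
          intro x hx; rw [hnp]; exact hpow x hx
        have h11 : (1 : F) ^ m = 1 := one_pow m
        -- basic moves
        have Mp : ∀ (x c : F), walkLen (monomialArc (F := F) m m) 4 (x, c) (1, c + 1) := by
          intro x c
          refine walkLen_cons (mstep x c 0 (-c) ?_)
            (walkLen_cons (mstep 0 (-c) 0 c ?_)
              (walkLen_cons (mstep 0 c 1 (-c) ?_)
                (walkLen_one (mstep 1 (-c) 1 (c + 1) ?_))))
          · rw [hm0, mul_zero]; ring
          · rw [hm0, mul_zero]; ring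
          · rw [hm0, zero_mul]; ring
          · rw [h11, one_mul]; ring
        have Mpu : ∀ (x c uu : F), uu ≠ 0 →
            walkLen (monomialArc (F := F) m m) 4 (x, c) (uu, c + 1) := by
          intro x c uu huu
          refine walkLen_cons (mstep x c 0 (-c) ?_)
            (walkLen_cons (mstep 0 (-c) 0 c ?_)
              (walkLen_cons (mstep 0 c 1 (-c) ?_)
                (walkLen_one (mstep 1 (-c) uu (c + 1) ?_))))
          · rw [hm0, mul_zero]; ring
          · rw [hm0, mul_zero]; ring
          · rw [hm0, zero_mul]; ring
          · rw [h11, hx1 uu huu, one_mul]; ring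
        have Mm : ∀ (x c : F), walkLen (monomialArc (F := F) m m) 4 (x, c) (0, c - 1) := by
          intro x c
          refine walkLen_cons (mstep x c 0 (-c) ?_)
            (walkLen_cons (mstep 0 (-c) 1 c ?_)
              (walkLen_cons (mstep 1 c 1 (1 - c) ?_)
                (walkLen_one (mstep 1 (1 - c) 0 (c - 1) ?_))))
          · rw [hm0, mul_zero]; ring
          · rw [hm0, zero_mul]; ring
          · rw [h11, one_mul]; ring
          · rw [h11, hm0, one_mul]; ring
        have D1u : ∀ (c uu : F), walkLen (monomialArc (F := F) m m) 4 (1, c) (uu, c - 1) := by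
          intro c uu
          refine walkLen_cons (mstep 1 c 1 (1 - c) ?_)
            (walkLen_cons (mstep 1 (1 - c) 0 (c - 1) ?_)
              (walkLen_cons (mstep 0 (c - 1) 0 (1 - c) ?_)
                (walkLen_one (mstep 0 (1 - c) uu (c - 1) ?_))))
          · rw [h11, one_mul]; ring
          · rw [h11, hm0, one_mul]; ring
          · rw [hm0, mul_zero]; ring
          · rw [hm0, zero_mul]; ring
        -- chains
        have chainP1 : ∀ (i : ℕ) (c : F),
            walkLen (monomialArc (F := F) m m) (4 * i) (1, c) (1, c + (i : F)) := by
          intro i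
          induction i with
          | zero =>
              intro c
              show ((1 : F), c) = ((1 : F), c + ((0 : ℕ) : F))
              norm_num
          | succ i ih =>
              intro c
              have W := walkLen_trans (Mp 1 c) (ih (c + 1))
              rw [show 4 + 4 * i = 4 * (i + 1) by ring] at W
              rw [show c + 1 + (i : F) = c + ((i + 1 : ℕ) : F) by push_cast; ring] at W
              exact W
        have chainM1 : ∀ (j : ℕ) (c : F),
            walkLen (monomialArc (F := F) m m) (4 * j) (1, c) (1, c - (j : F)) := by
          intro j
          induction j with
          | zero =>
              intro c
              show ((1 : F), c) = ((1 : F), c - ((0 : ℕ) : F))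
              norm_num
          | succ j ih =>
              intro c
              have W := walkLen_trans (D1u c 1) (ih (c - 1))
              rw [show 4 + 4 * j = 4 * (j + 1) by ring] at W
              rw [show c - 1 - (j : F) = c - ((j + 1 : ℕ) : F) by push_cast; ring] at W
              exact W
        have chainM0 : ∀ (j : ℕ) (c : F),
            walkLen (monomialArc (F := F) m m) (4 * j) (0, c) (0, c - (j : F)) := by
          intro j
          induction j with
          | zero =>
              intro c
              show ((0 : F), c) = ((0 : F), c - ((0 : ℕ) : F))
              norm_num
          | succ j ih =>
              intro c
              have W := walkLen_trans (Mm 0 c) (ih (c - 1))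
              rw [show 4 + 4 * j = 4 * (j + 1) by ring] at W
              rw [show c - 1 - (j : F) = c - ((j + 1 : ℕ) : F) by push_cast; ring] at W
              exact W
        -- routes
        have routeC1 : ∀ (i : ℕ),
            walkLen (monomialArc (F := F) m m) (4 * i + 5) (a, b) (u, u ^ m - (b + (i : F) + 1)) := by
          intro i
          have W1 := walkLen_trans (Mp a b) (chainP1 i (b + 1))
          have W2 := walkLen_trans W1
            (walkLen_one (mstep 1 (b + 1 + (i : F)) u (u ^ m - (b + (i : F) + 1)) (by rw [h11, one_mul]; ring)))
          rw [show 4 + 4 * i + 1 = 4 * i + 5 by ring] at W2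
          exact W2
        have routeC2 : ∀ (j : ℕ),
            walkLen (monomialArc (F := F) m m) (4 * j + 5) (a, b) (u, (j : F) + 1 - b) := by
          intro j
          have W1 := walkLen_trans (Mm a b) (chainM0 j (b - 1))
          have W2 := walkLen_trans W1
            (walkLen_one (mstep 0 (b - 1 - (j : F)) u ((j : F) + 1 - b) (by rw [hm0, zero_mul]; ring)))
          rw [show 4 + 4 * j + 1 = 4 * j + 5 by ring] at W2
          exact W2
        have routeC3 : walkLen (monomialArc (F := F) m m) 1 (a, b) (u, a ^ m * u ^ m - b) :=
          walkLen_one (mstep a b u (a ^ m * u ^ m - b) (by ring))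
        have entryC : walkLen (monomialArc (F := F) m m) 1 (a, b) (1, a ^ m - b) :=
          walkLen_one (mstep a b 1 (a ^ m - b) (by rw [h11, mul_one]; ring))
        have routeC4p : ∀ (i : ℕ), u ≠ 0 →
            walkLen (monomialArc (F := F) m m) (4 * i + 5) (a, b) (u, a ^ m - b + (i : F) + 1) := by
          intro i hu
          have W1 := walkLen_trans entryC (chainP1 i (a ^ m - b))
          have W2 := walkLen_trans W1 (Mpu 1 (a ^ m - b + (i : F)) u hu)
          rw [show 1 + 4 * i + 4 = 4 * i + 5 by ring] at W2
          rw [show a ^ m - b + (i : F) + 1 = a ^ m - b + (i : F) + 1 by ring] at W2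
          exact W2
        have routeC4m : ∀ (j : ℕ),
            walkLen (monomialArc (F := F) m m) (4 * j + 5) (a, b) (u, a ^ m - b - (j : F) - 1) := by
          intro j
          have W1 := walkLen_trans entryC (chainM1 j (a ^ m - b))
          have W2 := walkLen_trans W1 (D1u (a ^ m - b - (j : F)) u)
          rw [show 1 + 4 * j + 4 = 4 * j + 5 by ring] at W2
          rw [show a ^ m - b - (j : F) - 1 = a ^ m - b - (j : F) - 1 by ring] at W2
          exact W2
        -- coverage
        obtain ⟨T, hTlt, hT⟩ := hrepr (v + b)
        by_cases hu : u = 0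
        · subst hu
          have hum : (0 : F) ^ m = 0 := hm0
          rcases Nat.eq_zero_or_pos T with hT0 | hT1
        -- T = 0 : direct arc
          · refine ⟨1, by omega, ?_⟩
            have hv : a ^ m * (0 : F) ^ m - b = v := by
              rw [hm0, mul_zero]
              have : v + b = 0 := by rw [← hT, hT0]; norm_num
              linear_combination -this
            have := routeC3
            rw [hv] at this
            exact this
          · by_cases hTh : T ≤ hh
            · -- routeC2 with j = T - 1
              refine ⟨4 * (T - 1) + 5, by omega, ?_⟩
              have hv : ((T - 1 : ℕ) : F) + 1 - b = v := by
                rw [Nat.cast_sub hT1]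
                rw [hT] at *
                linear_combination hT
              have := routeC2 (T - 1)
              rw [hv] at this
              exact this
            · -- T ≥ hh + 1 : routeC1 with i = p - T - 1
              refine ⟨4 * (p - T - 1) + 5, by omega, ?_⟩
              have hv : (0 : F) ^ m - (b + ((p - T - 1 : ℕ) : F) + 1) = v := by
                rw [hm0]
                have hc : ((p - T - 1 : ℕ) : F) = -(T : F) - 1 := by
                  have h1 : ((p - T - 1 : ℕ) : F) = (p : F) - (T : F) - 1 := by
                    rw [Nat.cast_sub (by omega : 1 ≤ p - T), Nat.cast_sub (by omega : T ≤ p),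
                      Nat.cast_one]
                  rw [h1, hp0]; ring
                rw [hc]
                linear_combination hT
              have := routeC1 (p - T - 1)
              rw [hv] at this
              exact this
        · -- u ≠ 0
          have hum : u ^ m = 1 := hx1 u hu
          rcases Nat.eq_zero_or_pos T with hT0 | hT1
          · -- T = 0, i.e. v = -b
            have hvb : v = -b := by
              have : v + b = 0 := by rw [← hT, hT0]; norm_num
              linear_combination this
            by_cases ha : a = 0
            · refine ⟨1, by omega, ?_⟩
              have hv : a ^ m * u ^ m - b = v := by
                rw [ha, hm0, zero_mul, hvb]; ring
              have := routeC3
              rw [hv] at this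
              exact this
            · refine ⟨4 * 0 + 5, by omega, ?_⟩
              have hv : a ^ m - b - ((0 : ℕ) : F) - 1 = v := by
                rw [hx1 a ha, hvb]; norm_num
              have := routeC4m 0
              rw [hv] at this
              exact this
          · by_cases hTh : T ≤ hh
            · refine ⟨4 * (T - 1) + 5, by omega, ?_⟩
              have hv : ((T - 1 : ℕ) : F) + 1 - b = v := by
                rw [Nat.cast_sub hT1]
                linear_combination hT
              have := routeC2 (T - 1)
              rw [hv] at this
              exact this
            · by_cases hTh2 : T = hh + 1
              · -- tight case
                by_cases ha : a = 0
                · refine ⟨4 * (hh - 1) + 5, by omega, ?_⟩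
                  have hv : a ^ m - b - ((hh - 1 : ℕ) : F) - 1 = v := by
                    rw [ha, hm0, Nat.cast_sub hh1]
                    have hph0 : ((2 * hh + 1 : ℕ) : F) = 0 := by rw [← hph]; exact hp0
                    push_cast at hph0 ⊢
                    have hT' : (T : F) = v + b := hT
                    rw [hTh2] at hT'
                    push_cast at hT'
                    linear_combination hT' - hph0
                  have := routeC4m (hh - 1)
                  rw [hv] at this
                  exact this
                · refine ⟨4 * (hh - 1) + 5, by omega, ?_⟩
                  have hv : a ^ m - b + ((hh - 1 : ℕ) : F) + 1 = v := by
                    rw [hx1 a ha, Nat.cast_sub hh1]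
                    have hT' : (T : F) = v + b := hT
                    rw [hTh2] at hT'
                    push_cast at hT'
                    linear_combination hT'
                  have := routeC4p (hh - 1) hu
                  rw [hv] at this
                  exact this
              · -- T ≥ hh + 2 : routeC1 with i = p - T
                refine ⟨4 * (p - T) + 5, by omega, ?_⟩
                have hv : u ^ m - (b + ((p - T : ℕ) : F) + 1) = v := by
                  rw [hum]
                  have hc : ((p - T : ℕ) : F) = -(T : F) := by
                    have h1 : ((p - T : ℕ) : F) = (p : F) - (T : F) := by
                      push_cast [Nat.cast_sub (by omega : T ≤ p)]
                      ring
                    rw [h1, hp0]; ring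
                  rw [hc]
                  linear_combination hT
                have := routeC1 (p - T)
                rw [hv] at this
                exact this
      · -- CASE B : m = n < p - 1
        have hmlt : m < p - 1 := by omega
        have hγ : g ^ m - 1 ≠ 0 := by
          intro h
          exact hgk m (by omega) hmlt (by linear_combination h)
        have upmove : ∀ (x : F), x ≠ 0 → ∀ c : F,
            walkLen (monomialArc (F := F) m m) 2 (x, c) (x * g, c + (g ^ m - 1)) := by
          intro x hx c
          refine walkLen_cons (mstep x c x⁻¹ (x ^ m * (x⁻¹) ^ m - c) (by ring))
            (walkLen_one (mstep x⁻¹ (x ^ m * (x⁻¹) ^ m - c) (x * g) (c + (g ^ m - 1)) ?_))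
          have e1 : (x⁻¹) ^ m * (x * g) ^ m = g ^ m := by
            rw [← mul_pow, ← mul_assoc, inv_mul_cancel₀ hx, one_mul]
          have e2 : x ^ m * (x⁻¹) ^ m = 1 := by
            rw [← mul_pow, mul_inv_cancel₀ hx, one_pow]
          rw [e1]
          linear_combination e2
        have downmove : ∀ (x : F), x ≠ 0 → ∀ c : F,
            walkLen (monomialArc (F := F) m m) 2 (x, c) (x * g⁻¹, c - (g ^ m - 1)) := by
          intro x hx c
          refine walkLen_cons (mstep x c (x⁻¹ * g) (x ^ m * (x⁻¹ * g) ^ m - c) (by ring))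
            (walkLen_one (mstep (x⁻¹ * g) (x ^ m * (x⁻¹ * g) ^ m - c) (x * g⁻¹)
              (c - (g ^ m - 1)) ?_))
          have e1 : (x⁻¹ * g) ^ m * (x * g⁻¹) ^ m = 1 := by
            rw [← mul_pow]
            have : x⁻¹ * g * (x * g⁻¹) = 1 := by field_simp
            rw [this, one_pow]
          have e2 : x ^ m * (x⁻¹ * g) ^ m = g ^ m := by
            rw [← mul_pow, ← mul_assoc, mul_inv_cancel₀ hx, one_mul]
          rw [e1, e2]
          ring
        have chainUp : ∀ (j : ℕ) (x : F), x ≠ 0 → ∀ c : F,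
            ∃ y : F, walkLen (monomialArc (F := F) m m) (2 * j) (x, c)
              (y, c + (j : F) * (g ^ m - 1)) := by
          intro j
          induction j with
          | zero =>
              intro x hx c
              refine ⟨x, ?_⟩
              show (x, c) = (x, c + ((0 : ℕ) : F) * (g ^ m - 1))
              norm_num
          | succ j ih =>
              intro x hx c
              obtain ⟨y, hy⟩ := ih (x * g) (mul_ne_zero hx hg0) (c + (g ^ m - 1))
              refine ⟨y, ?_⟩
              have W := walkLen_trans (upmove x hx c) hy
              rw [show 2 + 2 * j = 2 * (j + 1) by ring] at W
              rw [show c + (g ^ m - 1) + (j : F) * (g ^ m - 1)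
                    = c + ((j + 1 : ℕ) : F) * (g ^ m - 1) by push_cast; ring] at W
              exact W
        have chainDown : ∀ (j : ℕ) (x : F), x ≠ 0 → ∀ c : F,
            ∃ y : F, walkLen (monomialArc (F := F) m m) (2 * j) (x, c)
              (y, c - (j : F) * (g ^ m - 1)) := by
          intro j
          induction j with
          | zero =>
              intro x hx c
              refine ⟨x, ?_⟩
              show (x, c) = (x, c - ((0 : ℕ) : F) * (g ^ m - 1))
              norm_num
          | succ j ih =>
              intro x hx c
              obtain ⟨y, hy⟩ := ih (x * g⁻¹) (mul_ne_zero hx (inv_ne_zero hg0)) (c - (g ^ m - 1))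
              refine ⟨y, ?_⟩
              have W := walkLen_trans (downmove x hx c) hy
              rw [show 2 + 2 * j = 2 * (j + 1) by ring] at W
              rw [show c - (g ^ m - 1) - (j : F) * (g ^ m - 1)
                    = c - ((j + 1 : ℕ) : F) * (g ^ m - 1) by push_cast; ring] at W
              exact W
        have exit2 : ∀ (x d : F), walkLen (monomialArc (F := F) m m) 2 (x, d) (u, d) := by
          intro x d
          refine walkLen_cons (mstep x d 0 (-d) (by rw [hm0, mul_zero]; ring))
            (walkLen_one (mstep 0 (-d) u d (by rw [hm0, zero_mul]; ring)))
        have entryB : walkLen (monomialArc (F := F) m m) 1 (a, b) (1, a ^ m - b) :=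
          walkLen_one (mstep a b 1 (a ^ m - b) (by rw [one_pow, mul_one]; ring))
        have routeUp : ∀ (j : ℕ), walkLen (monomialArc (F := F) m m) (2 * j + 3) (a, b)
            (u, a ^ m - b + (j : F) * (g ^ m - 1)) := by
          intro j
          obtain ⟨y, hy⟩ := chainUp j 1 one_ne_zero (a ^ m - b)
          have W := walkLen_trans entryB (walkLen_trans hy (exit2 y _))
          rw [show 1 + (2 * j + 2) = 2 * j + 3 by ring] at W
          exact W
        have routeDown : ∀ (j : ℕ), walkLen (monomialArc (F := F) m m) (2 * j + 3) (a, b)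
            (u, a ^ m - b - (j : F) * (g ^ m - 1)) := by
          intro j
          obtain ⟨y, hy⟩ := chainDown j 1 one_ne_zero (a ^ m - b)
          have W := walkLen_trans entryB (walkLen_trans hy (exit2 y _))
          rw [show 1 + (2 * j + 2) = 2 * j + 3 by ring] at W
          exact W
        -- coverage
        obtain ⟨w, hwlt, hw⟩ := hrepr ((v - a ^ m + b) * (g ^ m - 1)⁻¹)
        by_cases hww : w ≤ p - 2
        · refine ⟨2 * w + 3, by omega, ?_⟩
          have hv : a ^ m - b + (w : F) * (g ^ m - 1) = v := by
            have h1 : (w : F) * (g ^ m - 1) = v - a ^ m + b := by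
              rw [hw]; field_simp
            linear_combination h1
          have := routeUp w
          rw [hv] at this
          exact this
        · have hwp : w = p - 1 := by omega
          refine ⟨2 * 1 + 3, by omega, ?_⟩
          have hv : a ^ m - b - ((1 : ℕ) : F) * (g ^ m - 1) = v := by
            have h1 : ((p - 1 : ℕ) : F) = -1 := by
              rw [Nat.cast_sub hp.one_le, hp0]; ring
            have h2 : (v - a ^ m + b) * (g ^ m - 1)⁻¹ = -1 := by
              rw [← hw, hwp, h1]
            have h3 : v - a ^ m + b = -(g ^ m - 1) := by
              field_simp at h2
              linear_combination h2
            push_cast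
            linear_combination -h3
          have := routeDown 1
          rw [hv] at this
          exact this
    · -- CASE A : m < n
      have hlt : m < n := by omega
      have hγ : g ^ m - g ^ n ≠ 0 := by
        intro h
        have h2 : g ^ m * g ^ (n - m) = g ^ m * 1 := by
          rw [mul_one, ← pow_add, show m + (n - m) = n by omega]
          linear_combination -h
        have h3 := mul_left_cancel₀ (pow_ne_zero m hg0) h2
        exact hgk (n - m) (by omega) (by omega) h3
      have loop2 : ∀ c : F, walkLen (monomialArc (F := F) m n) 2 (1, c)
          (1, c + (g ^ m - g ^ n)) := by
        intro c
        refine walkLen_cons (mstep 1 c g (g ^ n - c) (by rw [one_pow, one_mul]; ring))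
          (walkLen_one (mstep g (g ^ n - c) 1 (c + (g ^ m - g ^ n)) (by rw [one_pow, mul_one]; ring)))
      have chainA : ∀ (j : ℕ) (c : F), walkLen (monomialArc (F := F) m n) (2 * j) (1, c)
          (1, c + (j : F) * (g ^ m - g ^ n)) := by
        intro j
        induction j with
        | zero =>
            intro c
            show ((1 : F), c) = ((1 : F), c + ((0 : ℕ) : F) * (g ^ m - g ^ n))
            norm_num
        | succ j ih =>
            intro c
            have W := walkLen_trans (loop2 c) (ih (c + (g ^ m - g ^ n)))
            rw [show 2 + 2 * j = 2 * (j + 1) by ring] at W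
            rw [show c + (g ^ m - g ^ n) + (j : F) * (g ^ m - g ^ n)
                  = c + ((j + 1 : ℕ) : F) * (g ^ m - g ^ n) by push_cast; ring] at W
            exact W
      have entryA : walkLen (monomialArc (F := F) m n) 1 (a, b) (1, a ^ m - b) :=
        walkLen_one (mstep a b 1 (a ^ m - b) (by rw [one_pow, mul_one]; ring))
      have flipA : ∀ c : F, walkLen (monomialArc (F := F) m n) 1 (1, c) (1, 1 - c) := by
        intro c
        exact walkLen_one (mstep 1 c 1 (1 - c) (by rw [one_pow, one_pow, one_mul]; ring))
      have exitA : ∀ (d : F), walkLen (monomialArc (F := F) m n) 1 (1, d) (u, u ^ n - d) := by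
        intro d
        exact walkLen_one (mstep 1 d u (u ^ n - d) (by rw [one_pow, one_mul]; ring))
      have routeR2 : ∀ (j : ℕ), walkLen (monomialArc (F := F) m n) (2 * j + 3) (a, b)
          (u, u ^ n - 1 + a ^ m - b - (j : F) * (g ^ m - g ^ n)) := by
        intro j
        have W1 := walkLen_trans entryA (flipA (a ^ m - b))
        have W2 := walkLen_trans W1 (chainA j (1 - (a ^ m - b)))
        have W3 := walkLen_trans W2
          (exitA (1 - (a ^ m - b) + (j : F) * (g ^ m - g ^ n)))
        rw [show 1 + 1 + 2 * j + 1 = 2 * j + 3 by ring] at W3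
        rw [show u ^ n - (1 - (a ^ m - b) + (j : F) * (g ^ m - g ^ n))
              = u ^ n - 1 + a ^ m - b - (j : F) * (g ^ m - g ^ n) by ring] at W3
        exact W3
      have routeR3 : ∀ (j : ℕ), walkLen (monomialArc (F := F) m n) (2 * j + 3) (a, b)
          (u, u ^ n - 1 + a ^ m - b + (j : F) * (g ^ m - g ^ n)) := by
        intro j
        have W1 := walkLen_trans entryA (chainA j (a ^ m - b))
        have W2 := walkLen_trans W1 (flipA (a ^ m - b + (j : F) * (g ^ m - g ^ n)))
        have W3 := walkLen_trans W2
          (exitA (1 - (a ^ m - b + (j : F) * (g ^ m - g ^ n))))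
        rw [show 1 + 2 * j + 1 + 1 = 2 * j + 3 by ring] at W3
        rw [show u ^ n - (1 - (a ^ m - b + (j : F) * (g ^ m - g ^ n)))
              = u ^ n - 1 + a ^ m - b + (j : F) * (g ^ m - g ^ n) by ring] at W3
        exact W3
      -- coverage
      obtain ⟨w, hwlt, hw⟩ := hrepr ((u ^ n - 1 + a ^ m - b - v) * (g ^ m - g ^ n)⁻¹)
      by_cases hww : w ≤ p - 2
      · refine ⟨2 * w + 3, by omega, ?_⟩
        have hv : u ^ n - 1 + a ^ m - b - (w : F) * (g ^ m - g ^ n) = v := by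
          have h1 : (w : F) * (g ^ m - g ^ n) = u ^ n - 1 + a ^ m - b - v := by
            rw [hw]; field_simp
          linear_combination -h1
        have := routeR2 w
        rw [hv] at this
        exact this
      · have hwp : w = p - 1 := by omega
        refine ⟨2 * 1 + 3, by omega, ?_⟩
        have hv : u ^ n - 1 + a ^ m - b + ((1 : ℕ) : F) * (g ^ m - g ^ n) = v := by
          have h1 : ((p - 1 : ℕ) : F) = -1 := by
            rw [Nat.cast_sub hp.one_le, hp0]; ring
          have h2 : (u ^ n - 1 + a ^ m - b - v) * (g ^ m - g ^ n)⁻¹ = -1 := by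
            rw [← hw, hwp, h1]
          have h3 : u ^ n - 1 + a ^ m - b - v = -(g ^ m - g ^ n) := by
            field_simp at h2
            linear_combination h2
          push_cast
          linear_combination h3
        have := routeR3 1
        rw [hv] at this
        exact this
end

section
/- Let p be a prime. Then diam(D(p; p−1, p−1)) = 2p − 1. -/
set_option linter.unusedSectionVars false

theorem walkLen_zero {V : Type*} (r : V → V → Prop) (x y : V) :
    walkLen r 0 x y ↔ x = y := Iff.rfl

theorem walkLen_succ {V : Type*} (r : V → V → Prop) (k : ℕ) (x y : V) :
    walkLen r (k+1) x y ↔ ∃ z, r x z ∧ walkLen r k z y := Iff.rfl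

theorem walkLen_append {V : Type*} {r : V → V → Prop} :
    ∀ (m n : ℕ) (x z y : V), walkLen r m x z → walkLen r n z y → walkLen r (m + n) x y := by
  intro m
  induction m with
  | zero => intro n x z y h1 h2; rw [walkLen_zero] at h1; subst h1; simpa using h2
  | succ k ih =>
      intro n x z y h1 h2
      obtain ⟨w, hw, h1'⟩ := h1
      rw [show k + 1 + n = (k + n) + 1 by omega]
      exact ⟨w, hw, ih n w z y h1' h2⟩

theorem walkLen_snoc {V : Type*} {r : V → V → Prop} {n : ℕ} {x z y : V}
    (h1 : walkLen r n x z) (h2 : r z y) : walkLen r (n + 1) x y :=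
  walkLen_append n 1 x z y h1 ⟨y, h2, rfl⟩

theorem walkLen_succ_iff {V : Type*} {r : V → V → Prop} :
    ∀ (n : ℕ) (x y : V), walkLen r (n+1) x y ↔ ∃ z, walkLen r n x z ∧ r z y := by
  intro n
  induction n with
  | zero =>
      intro x y
      constructor
      · rintro ⟨z, hz, h0⟩; rw [walkLen_zero] at h0; subst h0; exact ⟨x, rfl, hz⟩
      · rintro ⟨z, h0, hz⟩; rw [walkLen_zero] at h0; subst h0; exact ⟨y, hz, rfl⟩
  | succ k ih =>
      intro x y
      constructor
      · rintro ⟨z, hz, h1⟩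
        obtain ⟨w, hw1, hw2⟩ := (ih z y).1 h1
        exact ⟨w, ⟨z, hz, hw1⟩, hw2⟩
      · rintro ⟨z, h1, hz⟩
        obtain ⟨w, hw, h1'⟩ := h1
        exact ⟨w, hw, (ih w y).2 ⟨z, h1', hz⟩⟩

theorem walkLen_rev {V : Type*} {r : V → V → Prop} (hr : ∀ a b, r a b → r b a) :
    ∀ (n : ℕ) (x y : V), walkLen r n x y → walkLen r n y x := by
  intro n
  induction n with
  | zero => intro x y h; exact h.symm
  | succ k ih =>
      rintro x y ⟨z, hz, h⟩
      exact walkLen_snoc (ih z y h) (hr x z hz)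

open Classical in
noncomputable def iota {F : Type*} [Field F] (v : F × F) : ℤ :=
  if v.1 = 0 then 0 else 1

theorem iota_cases {F : Type*} [Field F] (v : F × F) : iota v = 0 ∨ iota v = 1 := by
  unfold iota
  by_cases h : v.1 = 0 <;> simp [h]

theorem iota_of_eq {F : Type*} [Field F] {v : F × F} (h : v.1 = 0) : iota v = 0 := by
  simp [iota, h]

theorem iota_of_ne {F : Type*} [Field F] {v : F × F} (h : v.1 ≠ 0) : iota v = 1 := by
  simp [iota, h]



section Main

variable {p : ℕ} (hp : p.Prime) {F : Type*} [Field F] [Fintype F] (hF : Fintype.card F = p)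

theorem arc_symm (x y : F × F) (h : monomialArc (F := F) (p-1) (p-1) x y) :
    monomialArc (F := F) (p-1) (p-1) y x := by
  unfold monomialArc at *
  rw [add_comm, mul_comm] at h
  exact h

include hp hF

theorem charF : CharP F p := by
  have : Nontrivial F := inferInstance
  exact (CharP.charP_iff_prime_eq_zero hp).2 (hF ▸ Nat.cast_card_eq_zero F)

theorem pow_zero_eq : (0:F) ^ (p-1) = 0 := by
  apply zero_pow
  have := hp.two_le
  omega

theorem pow_ne_eq {a : F} (ha : a ≠ 0) : a ^ (p-1) = 1 := by
  rw [← hF]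
  exact FiniteField.pow_card_sub_one_eq_one a ha

/-- every element of F is ± a small natural number -/
theorem rep_lemma (q : ℕ) (hq : p = 2*q+1) (δ : F) :
    ∃ k : ℕ, k ≤ q ∧ ((k : F) = δ ∨ (k : F) = -δ) := by
  haveI : CharP F p := charF hp hF
  haveI : NeZero p := ⟨hp.ne_zero⟩
  obtain ⟨z, hz⟩ := (ZMod.ringEquivOfPrime F hp hF).surjective δ
  have hval : ((z.val : ℕ) : F) = δ := by
    have h1 : ((z.val : ℕ) : ZMod p) = z := ZMod.natCast_rightInverse z
    calc ((z.val : ℕ) : F) = (ZMod.ringEquivOfPrime F hp hF) ((z.val : ℕ) : ZMod p) :=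
          (map_natCast _ _).symm
      _ = δ := by rw [h1, hz]
  have hlt : z.val < p := ZMod.val_lt z
  by_cases hk : z.val ≤ q
  · exact ⟨z.val, hk, Or.inl hval⟩
  · refine ⟨p - z.val, by omega, Or.inr ?_⟩
    have : ((p - z.val : ℕ) : F) = (p : F) - ((z.val : ℕ) : F) := by
      rw [Nat.cast_sub (le_of_lt hlt)]
    rw [this, hval, CharP.cast_eq_zero F p, zero_sub]

theorem low_lemma :
    ∀ (n : ℕ) (x y : F × F), walkLen (monomialArc (F := F) (p-1) (p-1)) n x y →
      ∃ S : ℤ, y.2 = (-1)^n * x.2 + (S : F) ∧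
        -(n:ℤ) - 1 - iota x + 2 * iota y ≤ 4*S ∧ 4*S ≤ (n:ℤ) + iota x + 2 * iota y := by
  intro n
  induction n with
  | zero =>
      intro x y h
      rw [walkLen_zero] at h
      subst h
      refine ⟨0, by simp, ?_, ?_⟩ <;> rcases iota_cases x with h | h <;> rw [h] <;> simp
  | succ k ih =>
      intro x y h
      obtain ⟨z, hxz, hzy⟩ := (walkLen_succ_iff k x y).1 h
      obtain ⟨S', hS'eq, hS'lo, hS'hi⟩ := ih x z hxz
      refine ⟨iota z * iota y - S', ?_, ?_, ?_⟩
      · have harc : z.2 + y.2 = z.1 ^ (p-1) * y.1 ^ (p-1) := hzy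
        have hcast : ((iota z * iota y : ℤ) : F) = z.1 ^ (p-1) * y.1 ^ (p-1) := by
          by_cases h1 : z.1 = 0 <;> by_cases h2 : y.1 = 0 <;>
            simp [iota, h1, h2, pow_zero_eq hp hF, pow_ne_eq hp hF]
        have : y.2 = ((iota z * iota y : ℤ) : F) - z.2 := by
          rw [hcast]; linear_combination harc
        rw [this, hS'eq]
        push_cast
        ring
      · have h2 := iota_cases z
        have h3 := iota_cases y
        push_cast
        rcases h2 with h2 | h2 <;> rcases h3 with h3 | h3 <;> rw [h2, h3] <;> linarith
      · have h2 := iota_cases z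
        have h3 := iota_cases y
        push_cast
        rcases h2 with h2 | h2 <;> rcases h3 with h3 | h3 <;> rw [h2, h3] <;> linarith

end Main

section Gadgets

variable {p : ℕ} (hp : p.Prime) {F : Type*} [Field F] [Fintype F] (hF : Fintype.card F = p)

include hp hF

theorem cyc4U (s c : F) (hc : c ≠ 0) :
    walkLen (monomialArc (F := F) (p-1) (p-1)) 4 (1, s) (c, s + 1) := by
  have h0 : (0:F)^(p-1) = 0 := pow_zero_eq hp hF
  have hc1 : c^(p-1) = 1 := pow_ne_eq hp hF hc
  refine ⟨(0, -s), ?_, (0, s), ?_, (1, -s), ?_, (c, s+1), ?_, rfl⟩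
  · show s + -s = (1:F)^(p-1) * (0:F)^(p-1); rw [h0]; ring
  · show -s + s = (0:F)^(p-1) * (0:F)^(p-1); rw [h0]; ring
  · show s + -s = (0:F)^(p-1) * (1:F)^(p-1); rw [h0]; ring
  · show -s + (s+1) = (1:F)^(p-1) * c^(p-1); rw [hc1, one_pow]; ring

theorem cyc4D (s c : F) (hc : c ≠ 0) :
    walkLen (monomialArc (F := F) (p-1) (p-1)) 4 (1, s) (c, s - 1) := by
  have h0 : (0:F)^(p-1) = 0 := pow_zero_eq hp hF
  have hc1 : c^(p-1) = 1 := pow_ne_eq hp hF hc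
  refine ⟨(1, 1-s), ?_, (0, s-1), ?_, (0, 1-s), ?_, (c, s-1), ?_, rfl⟩
  · show s + (1-s) = (1:F)^(p-1) * (1:F)^(p-1); rw [one_pow]; ring
  · show (1-s) + (s-1) = (1:F)^(p-1) * (0:F)^(p-1); rw [h0]; ring
  · show (s-1) + (1-s) = (0:F)^(p-1) * (0:F)^(p-1); rw [h0]; ring
  · show (1-s) + (s-1) = (0:F)^(p-1) * c^(p-1); rw [h0]; ring

theorem cycZU (t : F) :
    walkLen (monomialArc (F := F) (p-1) (p-1)) 4 ((0:F), t) ((0:F), t + 1) := by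
  have h0 : (0:F)^(p-1) = 0 := pow_zero_eq hp hF
  refine ⟨(1, -t), ?_, (1, 1+t), ?_, (0, -1-t), ?_, (0, t+1), ?_, rfl⟩
  · show t + -t = (0:F)^(p-1) * (1:F)^(p-1); rw [h0]; ring
  · show -t + (1+t) = (1:F)^(p-1) * (1:F)^(p-1); rw [one_pow]; ring
  · show (1+t) + (-1-t) = (1:F)^(p-1) * (0:F)^(p-1); rw [h0]; ring
  · show (-1-t) + (t+1) = (0:F)^(p-1) * (0:F)^(p-1); rw [h0]; ring

theorem cycZD (t : F) :
    walkLen (monomialArc (F := F) (p-1) (p-1)) 4 ((0:F), t) ((0:F), t - 1) := by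
  have h0 : (0:F)^(p-1) = 0 := pow_zero_eq hp hF
  refine ⟨(0, -t), ?_, (1, t), ?_, (1, 1-t), ?_, (0, t-1), ?_, rfl⟩
  · show t + -t = (0:F)^(p-1) * (0:F)^(p-1); rw [h0]; ring
  · show -t + t = (0:F)^(p-1) * (1:F)^(p-1); rw [h0]; ring
  · show t + (1-t) = (1:F)^(p-1) * (1:F)^(p-1); rw [one_pow]; ring
  · show (1-t) + (t-1) = (1:F)^(p-1) * (0:F)^(p-1); rw [h0]; ring

theorem gadU : ∀ (j : ℕ) (s : F),
    walkLen (monomialArc (F := F) (p-1) (p-1)) (4*j) (1, s) (1, s + (j : F)) := by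
  intro j
  induction j with
  | zero => intro s; show walkLen _ 0 _ _; rw [walkLen_zero]; norm_num
  | succ k ih =>
      intro s
      have h4 : walkLen (monomialArc (F := F) (p-1) (p-1)) 4 (1, s) (1, s + 1) :=
        cyc4U hp hF s 1 one_ne_zero
      have := walkLen_append 4 (4*k) _ _ _ h4 (ih (s+1))
      rw [show 4*(k+1) = 4 + 4*k by ring]
      convert this using 2
      push_cast; ring

theorem gadD : ∀ (j : ℕ) (s : F),
    walkLen (monomialArc (F := F) (p-1) (p-1)) (4*j) (1, s) (1, s - (j : F)) := by
  intro j
  induction j with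
  | zero => intro s; show walkLen _ 0 _ _; rw [walkLen_zero]; norm_num
  | succ k ih =>
      intro s
      have h4 : walkLen (monomialArc (F := F) (p-1) (p-1)) 4 (1, s) (1, s - 1) :=
        cyc4D hp hF s 1 one_ne_zero
      have := walkLen_append 4 (4*k) _ _ _ h4 (ih (s-1))
      rw [show 4*(k+1) = 4 + 4*k by ring]
      convert this using 2
      push_cast; ring

theorem gadZU : ∀ (j : ℕ) (t : F),
    walkLen (monomialArc (F := F) (p-1) (p-1)) (4*j) ((0:F), t) ((0:F), t + (j : F)) := by
  intro j
  induction j with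
  | zero => intro t; show walkLen _ 0 _ _; rw [walkLen_zero]; norm_num
  | succ k ih =>
      intro t
      have := walkLen_append 4 (4*k) _ _ _ (cycZU hp hF t) (ih (t+1))
      rw [show 4*(k+1) = 4 + 4*k by ring]
      convert this using 2
      push_cast; ring

theorem gadZD : ∀ (j : ℕ) (t : F),
    walkLen (monomialArc (F := F) (p-1) (p-1)) (4*j) ((0:F), t) ((0:F), t - (j : F)) := by
  intro j
  induction j with
  | zero => intro t; show walkLen _ 0 _ _; rw [walkLen_zero]; norm_num
  | succ k ih =>
      intro t
      have := walkLen_append 4 (4*k) _ _ _ (cycZD hp hF t) (ih (t-1))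
      rw [show 4*(k+1) = 4 + 4*k by ring]
      convert this using 2
      push_cast; ring

theorem conn (x : F × F) (v : F) (hv : v ≠ 0) :
    monomialArc (F := F) (p-1) (p-1) x (v, x.1^(p-1) - x.2) := by
  show x.2 + (x.1^(p-1) - x.2) = x.1^(p-1) * v^(p-1)
  rw [pow_ne_eq hp hF hv]; ring

theorem case1 (q : ℕ) (hq : p = 2*q+1) (x y : F × F) (hy : y.1 ≠ 0) :
    ∃ n, n ≤ 2*p-1 ∧ walkLen (monomialArc (F := F) (p-1) (p-1)) n x y := by
  obtain ⟨a, b⟩ := x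
  obtain ⟨c, d⟩ := y
  simp only at hy ⊢
  set s : F := a^(p-1) - b with hs
  obtain ⟨k, hk, hrep⟩ := rep_lemma hp hF q hq (d - s)
  match k, hrep with
  | 0, hrep =>
      have hδ : d = s := by
        rcases hrep with h | h <;> push_cast at h
        · linear_combination -h
        · linear_combination h
      refine ⟨1, by omega, (c, d), ?_, rfl⟩
      have := conn hp hF (a, b) c hy
      rw [hδ, hs]
      exact this
  | (j+1), hrep =>
      have step1 : monomialArc (F := F) (p-1) (p-1) (a, b) (1, s) :=
        conn hp hF (a, b) 1 one_ne_zero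
      rcases hrep with h | h
      · -- go up: s + (j+1) = d
        have hend : s + (j:F) + 1 = d := by
          push_cast at h
          linear_combination h
        have w1 := gadU hp hF j s
        have w2 := cyc4U hp hF (s + (j:F)) c hy
        have w3 := walkLen_append (4*j) 4 _ _ _ w1 w2
        rw [show s + (j:F) + 1 = d from hend] at w3
        exact ⟨4*j+4+1, by omega, (1, s), step1, w3⟩
      · -- go down: s - (j+1) = d
        have hend : s - (j:F) - 1 = d := by
          push_cast at h
          linear_combination -h
        have w1 := gadD hp hF j s
        have w2 := cyc4D hp hF (s - (j:F)) c hy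
        have w3 := walkLen_append (4*j) 4 _ _ _ w1 w2
        rw [show s - (j:F) - 1 = d from hend] at w3
        exact ⟨4*j+4+1, by omega, (1, s), step1, w3⟩

theorem case3 (q : ℕ) (hq : p = 2*q+1) (x y : F × F) (hx : x.1 = 0) (hy : y.1 = 0) :
    ∃ n, n ≤ 2*p-1 ∧ walkLen (monomialArc (F := F) (p-1) (p-1)) n x y := by
  obtain ⟨a, b⟩ := x
  obtain ⟨c, d⟩ := y
  simp only at hx hy
  subst hx; subst hy
  obtain ⟨k, hk, hrep⟩ := rep_lemma hp hF q hq (d - b)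
  rcases hrep with h | h
  · refine ⟨4*k, by omega, ?_⟩
    have := gadZU hp hF k b
    rw [show b + (k:F) = d by linear_combination h] at this
    exact this
  · refine ⟨4*k, by omega, ?_⟩
    have := gadZD hp hF k b
    rw [show b - (k:F) = d by linear_combination -h] at this
    exact this

theorem upper_odd (q : ℕ) (hq : p = 2*q+1) (x y : F × F) :
    ∃ n, n ≤ 2*p-1 ∧ walkLen (monomialArc (F := F) (p-1) (p-1)) n x y := by
  by_cases hy : y.1 = 0
  · by_cases hx : x.1 = 0
    · exact case3 hp hF q hq x y hx hy
    · obtain ⟨n, hn, hw⟩ := case1 hp hF q hq y x hx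
      exact ⟨n, hn, walkLen_rev (arc_symm) n y x hw⟩
  · exact case1 hp hF q hq x y hy

end Gadgets

section Rest

variable {p : ℕ} (hp : p.Prime) {F : Type*} [Field F] [Fintype F] (hF : Fintype.card F = p)

include hp hF

theorem upper_two (h2 : p = 2) (x y : F × F) :
    ∃ n, n ≤ 2*p-1 ∧ walkLen (monomialArc (F := F) (p-1) (p-1)) n x y := by
  subst h2
  have h2F : (2:F) = 0 := by
    have := Nat.cast_card_eq_zero F
    rw [hF] at this
    exact_mod_cast this
  have hone : ∀ z : F, z ≠ 0 → z = 1 := by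
    intro z hz
    have := pow_ne_eq hp hF hz
    simpa using this
  obtain ⟨a, b⟩ := x
  obtain ⟨c, d⟩ := y
  by_cases hdb : d = b
  · refine ⟨2, by norm_num, (0, -b), ?_, (c, d), ?_, rfl⟩
    · show b + -b = a^(2-1) * (0:F)^(2-1); norm_num
    · show -b + d = (0:F)^(2-1) * c^(2-1); norm_num [hdb]
  · have hd : d = b + 1 := by
      have h := hone (d - b) (sub_ne_zero.mpr hdb)
      linear_combination h
    by_cases hc : c = 0
    · subst hc
      by_cases ha : a = 0
      · refine ⟨3, by norm_num, (1, b), ?_, (1, 1+b), ?_, ((0:F), d), ?_, rfl⟩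
        · show b + b = a^(2-1) * (1:F)^(2-1); norm_num [ha]
          linear_combination b * h2F
        · show b + (1+b) = (1:F)^(2-1) * (1:F)^(2-1); norm_num
          linear_combination b * h2F
        · show (1+b) + d = (1:F)^(2-1) * (0:F)^(2-1); norm_num [hd]
          linear_combination (b+1) * h2F
      · refine ⟨2, by norm_num, (1, 1+b), ?_, ((0:F), d), ?_, rfl⟩
        · show b + (1+b) = a^(2-1) * (1:F)^(2-1)
          rw [hone a ha]; norm_num
          linear_combination b * h2F
        · show (1+b) + d = (1:F)^(2-1) * (0:F)^(2-1); norm_num [hd]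
          linear_combination (b+1) * h2F
    · refine ⟨3, by norm_num, (0, -b), ?_, (1, b), ?_, (c, d), ?_, rfl⟩
      · show b + -b = a^(2-1) * (0:F)^(2-1); norm_num
      · show -b + b = (0:F)^(2-1) * (1:F)^(2-1); norm_num
      · show b + d = (1:F)^(2-1) * c^(2-1)
        rw [hone c hc]; norm_num [hd]
        linear_combination b * h2F

theorem upper_all (x y : F × F) :
    ∃ n, n ≤ 2*p-1 ∧ walkLen (monomialArc (F := F) (p-1) (p-1)) n x y := by
  rcases hp.eq_two_or_odd' with h2 | hodd
  · exact upper_two hp hF h2 x y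
  · obtain ⟨q, hq⟩ := hodd
    exact upper_odd hp hF q (by omega) x y

theorem lower_two (h2 : p = 2) :
    ∀ n, walkLen (monomialArc (F := F) (p-1) (p-1)) n ((0:F), (0:F)) ((0:F), (1:F)) →
      2*p-1 ≤ n := by
  intro n hw
  obtain ⟨S, heq, hlo, hhi⟩ := low_lemma hp hF n _ _ hw
  simp only at heq
  rw [mul_zero, zero_add] at heq
  have hS0 : S ≠ 0 := by
    rintro rfl
    simp at heq
  rw [iota_of_eq (show ((0:F),(0:F)).1 = 0 from rfl),
      iota_of_eq (show ((0:F),(1:F)).1 = 0 from rfl)] at hlo hhi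
  subst h2
  omega

theorem lower_odd (q : ℕ) (hq : p = 2*q+1) :
    ∀ n, walkLen (monomialArc (F := F) (p-1) (p-1)) n ((0:F), (0:F)) ((1:F), (2:F)⁻¹) →
      2*p-1 ≤ n := by
  haveI : CharP F p := charF hp hF
  have h2ne : (2:F) ≠ 0 := by
    intro h
    have hdvd := (CharP.cast_eq_zero_iff F p 2).mp h
    have := Nat.le_of_dvd (by norm_num) hdvd
    have := hp.two_le
    interval_cases p
    · omega
  intro n hw
  obtain ⟨S, heq, hlo, hhi⟩ := low_lemma hp hF n _ _ hw
  simp only at heq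
  rw [mul_zero, zero_add] at heq
  have hcast : ((2*S - 1 : ℤ) : F) = 0 := by
    push_cast
    rw [← heq]
    field_simp
    norm_num
  have hdvd : (p:ℤ) ∣ (2*S - 1) := (CharP.intCast_eq_zero_iff F p _).mp hcast
  have hne : 2*S - 1 ≠ 0 := by omega
  have habs : (p:ℤ) ≤ |2*S - 1| := Int.le_of_dvd (abs_pos.mpr hne) ((dvd_abs _ _).mpr hdvd)
  rw [iota_of_eq (show ((0:F),(0:F)).1 = 0 from rfl),
      iota_of_ne (show ((1:F),(2:F)⁻¹).1 ≠ 0 from one_ne_zero)] at hlo hhi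
  rcases abs_cases (2*S - 1) with ⟨he, _⟩ | ⟨he, _⟩ <;> rw [he] at habs <;> omega

end Rest


theorem diam_eq_two_p_sub_one {p : ℕ} (hp : p.Prime)
    (F : Type*) [Field F] [Fintype F] (hF : Fintype.card F = p) :
    ddiam (monomialArc (F := F) (p - 1) (p - 1)) = ((2 * p - 1 : ℕ) : ℕ∞) := by
  apply le_antisymm
  · apply iSup₂_le
    intro x y
    obtain ⟨n, hn, hw⟩ := upper_all hp hF x y
    calc ddist (monomialArc (F := F) (p-1) (p-1)) x y ≤ (n : ℕ∞) := iInf₂_le n hw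
      _ ≤ ((2*p-1 : ℕ) : ℕ∞) := by exact_mod_cast hn
  · have key : ∃ x0 y0 : F × F,
        ∀ n, walkLen (monomialArc (F := F) (p-1) (p-1)) n x0 y0 → 2*p-1 ≤ n := by
      rcases hp.eq_two_or_odd' with h2 | hodd
      · exact ⟨((0:F),(0:F)), ((0:F),(1:F)), lower_two hp hF h2⟩
      · obtain ⟨q, hq⟩ := hodd
        exact ⟨((0:F),(0:F)), ((1:F),(2:F)⁻¹), lower_odd hp hF q (by omega)⟩
    obtain ⟨x0, y0, hl⟩ := key
    have h1 : ((2*p-1 : ℕ) : ℕ∞) ≤ ddist (monomialArc (F := F) (p-1) (p-1)) x0 y0 := by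
      apply le_iInf₂
      intro n hn
      exact_mod_cast hl n hn
    refine le_trans h1 ?_
    show ddist _ x0 y0 ≤ ⨆ x, ⨆ y, ddist (monomialArc (F := F) (p-1) (p-1)) x y
    exact le_iSup₂ (f := fun x y => ddist (monomialArc (F := F) (p-1) (p-1)) x y) x0 y0
end
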